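/- For every A ⊆ ω₁, the following are equivalent: (i) ω₁ ∈ Ã, i.e., there exists a bijection b : ω₁ → ω₁ such that {α < ω₁ : otp(b[α]) ∈ A} contains a club subset of ω₁; (ii) A contains a club subset of ω₁. (In the paper's words: only club subsets of ω₁ have ω₁ in their tildes.) -/

import Mathlib

noncomputable section

/-- The first uncountable ordinal. -/
def omega1 : Ordinal.{0} := (Cardinal.aleph 1).ord

/-- The second uncountable cardinal, as an ordinal. -/
def omega2 : Ordinal.{0} := (Cardinal.aleph 2).ord

open Classical in
/-- The order type of a set of ordinals (the unique ordinal whose lift is the order type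
of the set with its induced well-order; every bounded set of ordinals has one). -/
def otp (s : Set Ordinal.{0}) : Ordinal.{0} :=
  if h : ∃ o : Ordinal.{0}, Ordinal.lift.{1} o = Ordinal.type ((· < ·) : s → s → Prop)
  then h.choose else 0

/-- `C` is a club subset of `ω₁`: a subset of `ω₁` that is unbounded in `ω₁` and
closed, i.e. contains the supremum of each of its nonempty subsets that is bounded
below `ω₁`. -/
def IsClub' (C : Set Ordinal.{0}) : Prop :=
  C ⊆ Set.Iio omega1 ∧
  (∀ α < omega1, ∃ β ∈ C, α < β) ∧
  (∀ s : Set Ordinal.{0}, s ⊆ C → s.Nonempty → sSup s < omega1 → sSup s ∈ C)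

/-- `S` is a stationary subset of `ω₁`: it meets every club subset of `ω₁`. -/
def IsStationary' (S : Set Ordinal.{0}) : Prop := ∀ C, IsClub' C → (S ∩ C).Nonempty

/-- `S` is certified at `γ` modulo the sequence `A = ⟨A α : α < ω₁⟩`. -/
def Certified (A : Ordinal.{0} → Set Ordinal.{0}) (S : Set Ordinal.{0}) (γ : Ordinal.{0}) :
    Prop :=
  ∃ a : Ordinal.{0} → Set Ordinal.{0},
    (∀ α < omega1, a α ⊆ Set.Iio γ ∧ (a α).Countable ∧ otp (a α) ∈ ⋃ ξ ∈ S, A ξ) ∧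
    (∀ α β : Ordinal.{0}, α < β → β < omega1 → a α ⊂ a β) ∧
    (∀ β, β < omega1 → Order.IsSuccLimit β → a β = ⋃ (α) (_ : α < β), a α) ∧
    Set.Iio γ = ⋃ (α) (_ : α < omega1), a α

/-- `f` is a canonical function for `γ`: for some bijection `π : ω₁ → γ`,
`f α = otp (π[α])` for all `α < ω₁`. -/
def IsCanonical (γ : Ordinal.{0}) (f : Ordinal.{0} → Ordinal.{0}) : Prop :=
  ∃ π : Ordinal.{0} → Ordinal.{0}, Set.BijOn π (Set.Iio omega1) (Set.Iio γ) ∧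
    ∀ α < omega1, f α = otp (π '' Set.Iio α)

lemma otp_eq (s : Set Ordinal.{0}) (o : Ordinal.{0})
    (h : Ordinal.lift.{1} o = Ordinal.type ((· < ·) : s → s → Prop)) : otp s = o := by
  have hex : ∃ o : Ordinal.{0}, Ordinal.lift.{1} o = Ordinal.type ((· < ·) : s → s → Prop) := ⟨o, h⟩
  rw [otp, dif_pos hex]
  exact Ordinal.lift_inj.mp (hex.choose_spec.trans h.symm)

lemma otp_Iio (a : Ordinal.{0}) : otp (Set.Iio a) = a := by
  apply otp_eq
  rw [← Ordinal.typein_ordinal]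
  rfl

lemma omega1_isLimit : Order.IsSuccLimit omega1 := Cardinal.isSuccLimit_ord (Cardinal.aleph0_le_aleph 1)

lemma sSup_lt_omega1 {s : Set Ordinal.{0}} (hc : s.Countable) (hs : s ⊆ Set.Iio omega1) :
    sSup s < omega1 := by
  rcases s.eq_empty_or_nonempty with rfl | hne
  · simpa [sSup_empty] using omega1_isLimit.bot_lt
  · obtain ⟨f, rfl⟩ := hc.exists_eq_range hne
    rw [sSup_range, omega1]
    refine Cardinal.iSup_lt_ord_of_isRegular Cardinal.isRegular_aleph_one ?_ ?_
    · simpa using Cardinal.aleph0_lt_aleph_one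
    · exact fun i => hs (Set.mem_range_self i)

lemma IsClub'.choiceFun {C : Set Ordinal.{0}} (hC : IsClub' C) :
    ∃ f : Ordinal.{0} → Ordinal.{0}, ∀ α < omega1, f α ∈ C ∧ α < f α := by
  classical
  refine ⟨fun α => if h : α < omega1 then (hC.2.1 α h).choose else 0, fun α h => ?_⟩
  dsimp only
  rw [dif_pos h]
  obtain ⟨h1, h2⟩ := (hC.2.1 α h).choose_spec
  exact ⟨h1, h2⟩

lemma IsClub'.inter {C D : Set Ordinal.{0}} (hC : IsClub' C) (hD : IsClub' D) :
    IsClub' (C ∩ D) := by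
  obtain ⟨fC, hfC⟩ := hC.choiceFun
  obtain ⟨fD, hfD⟩ := hD.choiceFun
  refine ⟨fun x hx => hC.1 hx.1, ?_, ?_⟩
  · intro α hα
    -- build alternating sequence
    set e : ℕ → Ordinal.{0} := fun n => Nat.rec (fC α) (fun n x => if Even n then fD x else fC x) n with he
    have he0 : e 0 = fC α := rfl
    have hes : ∀ n, e (n + 1) = if Even n then fD (e n) else fC (e n) := fun n => rfl
    have key : ∀ n, e n < omega1 ∧ e n < e (n+1) ∧ (Even n → e n ∈ C) ∧ (¬ Even n → e n ∈ D) := by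
      intro n
      induction n with
      | zero =>
        have h0 := hfC α hα
        have h0w : e 0 < omega1 := hC.1 h0.1
        have h1 := hfD (e 0) h0w
        refine ⟨h0w, ?_, fun _ => h0.1, fun h => absurd Even.zero h⟩
        rw [hes 0, if_pos Even.zero]; exact h1.2
      | succ n ih =>
        obtain ⟨hw, hlt, hc, hd⟩ := ih
        by_cases hn : Even n
        · have h1 := hfD (e n) hw
          have h1w : e (n+1) < omega1 := by rw [hes n, if_pos hn]; exact hD.1 h1.1
          have h2 := hfC (e (n+1)) h1w
          have hodd : ¬ Even (n+1) := Nat.even_add_one.not.mpr (by simpa using hn)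
          refine ⟨h1w, ?_, fun h => absurd h hodd, fun _ => by rw [hes n, if_pos hn]; exact h1.1⟩
          rw [hes (n+1), if_neg (by simpa using hodd)]
          exact h2.2
        · have h1 := hfC (e n) hw
          have h1w : e (n+1) < omega1 := by rw [hes n, if_neg hn]; exact hC.1 h1.1
          have h2 := hfD (e (n+1)) h1w
          have heven : Even (n+1) := Nat.even_add_one.mpr hn
          refine ⟨h1w, ?_, fun _ => by rw [hes n, if_neg hn]; exact h1.1, fun h => absurd heven h⟩
          rw [hes (n+1), if_pos (by simpa using heven)]
          exact h2.2
    have emono : StrictMono e := strictMono_nat_of_lt_succ fun n => (key n).2.1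
    set sC : Set Ordinal.{0} := Set.range (fun n => e (2*n)) with hsC
    set sD : Set Ordinal.{0} := Set.range (fun n => e (2*n+1)) with hsD
    have hsCsub : sC ⊆ C := by rintro _ ⟨n, rfl⟩; exact (key (2*n)).2.2.1 (even_two_mul n)
    have hsDsub : sD ⊆ D := by
      rintro _ ⟨n, rfl⟩
      exact (key (2*n+1)).2.2.2 (by simp [Nat.even_add_one, even_two_mul n])
    have hsCw : sC ⊆ Set.Iio omega1 := fun x hx => hC.1 (hsCsub hx)
    have hsDw : sD ⊆ Set.Iio omega1 := fun x hx => hD.1 (hsDsub hx)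
    have hsCc : sC.Countable := Set.countable_range _
    have hsDc : sD.Countable := Set.countable_range _
    have hCb : BddAbove sC := ⟨omega1, fun x hx => (hsCw hx).le⟩
    have hDb : BddAbove sD := ⟨omega1, fun x hx => (hsDw hx).le⟩
    have hsupC : sSup sC < omega1 := sSup_lt_omega1 hsCc hsCw
    have hsupD : sSup sD < omega1 := sSup_lt_omega1 hsDc hsDw
    have heq : sSup sC = sSup sD := by
      apply le_antisymm
      · refine csSup_le ⟨_, ⟨0, rfl⟩⟩ ?_
        rintro _ ⟨n, rfl⟩
        exact le_trans (emono (show 2*n < 2*n+1 by omega)).le (le_csSup hDb ⟨n, rfl⟩)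
      · refine csSup_le ⟨_, ⟨0, rfl⟩⟩ ?_
        rintro _ ⟨n, rfl⟩
        exact le_trans (emono (show 2*n+1 < 2*(n+1) by omega)).le (le_csSup hCb ⟨n+1, rfl⟩)
    refine ⟨sSup sC, ⟨hC.2.2 sC hsCsub ⟨_, ⟨0, rfl⟩⟩ hsupC, ?_⟩, ?_⟩
    · rw [heq]; exact hD.2.2 sD hsDsub ⟨_, ⟨0, rfl⟩⟩ hsupD
    · calc α < e 0 := (hfC α hα).2
        _ ≤ sSup sC := le_csSup hCb ⟨0, by norm_num⟩
  · intro s hs hne hlt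
    exact ⟨hC.2.2 s (fun x hx => (hs hx).1) hne hlt, hD.2.2 s (fun x hx => (hs hx).2) hne hlt⟩

lemma countable_Iio {β : Ordinal.{0}} (h : β < omega1) : (Set.Iio β).Countable := by
  rw [Cardinal.countable_iff_lt_aleph_one, Ordinal.mk_Iio_ordinal]
  exact Cardinal.lift_lt_aleph_one.mpr (Cardinal.lt_ord.mp h)

lemma closurePoints_isClub {b : Ordinal.{0} → Ordinal.{0}}
    (hb : Set.BijOn b (Set.Iio omega1) (Set.Iio omega1)) :
    IsClub' {α | α < omega1 ∧ b '' Set.Iio α = Set.Iio α} := by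
  classical
  set E := {α | α < omega1 ∧ b '' Set.Iio α = Set.Iio α} with hE
  -- the bound function
  set T : Ordinal.{0} → Set Ordinal.{0} :=
    fun β => (b '' Set.Iio β) ∪ {x | x < omega1 ∧ b x < β} ∪ {β} with hT
  have hTsub : ∀ β < omega1, T β ⊆ Set.Iio omega1 := by
    intro β hβ x hx
    rcases hx with (hx | hx) | hx
    · obtain ⟨y, hy, rfl⟩ := hx
      exact hb.mapsTo (lt_trans hy hβ)
    · exact hx.1
    · simpa [Set.mem_singleton_iff.mp hx] using hβ
  have hTc : ∀ β < omega1, (T β).Countable := by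
    intro β hβ
    refine (((countable_Iio hβ).image b).union ?_).union (Set.countable_singleton β)
    refine Set.MapsTo.countable_of_injOn (t := Set.Iio β) (fun x hx => hx.2) ?_ (countable_Iio hβ)
    exact hb.injOn.mono fun x hx => hx.1
  set g : Ordinal.{0} → Ordinal.{0} :=
    fun β => if β < omega1 then sSup (T β) + 1 else 0 with hg
  have hgw : ∀ β < omega1, g β < omega1 := by
    intro β hβ
    rw [hg]; dsimp only; rw [if_pos hβ]
    exact omega1_isLimit.succ_lt (sSup_lt_omega1 (hTc β hβ) (hTsub β hβ))
  have hgmem : ∀ β < omega1, ∀ x ∈ T β, x < g β := by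
    intro β hβ x hx
    rw [hg]; dsimp only; rw [if_pos hβ]
    exact lt_of_le_of_lt (le_csSup ⟨omega1, fun y hy => (hTsub β hβ hy).le⟩ hx) (lt_add_one _)
  have hglt : ∀ β < omega1, β < g β := fun β hβ => hgmem β hβ β (by simp [hT])
  refine ⟨fun x hx => hx.1, ?_, ?_⟩
  · -- unbounded
    intro α hα
    set e : ℕ → Ordinal.{0} := fun n => Nat.rec α (fun _ x => g x) n with he
    have hes : ∀ n, e (n+1) = g (e n) := fun n => rfl
    have hew : ∀ n, e n < omega1 := by
      intro n; induction n with
      | zero => exact hα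
      | succ n ih => rw [hes]; exact hgw _ ih
    have emono : StrictMono e := strictMono_nat_of_lt_succ fun n => by
      rw [hes]; exact hglt _ (hew n)
    have hrw : Set.range e ⊆ Set.Iio omega1 := by rintro _ ⟨n, rfl⟩; exact hew n
    have hbdd : BddAbove (Set.range e) := ⟨omega1, fun x hx => (hrw hx).le⟩
    set σ := sSup (Set.range e) with hσ
    have hσw : σ < omega1 := sSup_lt_omega1 (Set.countable_range e) hrw
    have hle : ∀ n, e n ≤ σ := fun n => le_csSup hbdd ⟨n, rfl⟩
    have hex : ∀ x < σ, ∃ n, x < e n := by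
      intro x hx
      obtain ⟨_, ⟨n, rfl⟩, h⟩ := (lt_csSup_iff hbdd ⟨_, ⟨0, rfl⟩⟩).mp hx
      exact ⟨n, h⟩
    refine ⟨σ, ⟨hσw, ?_⟩, lt_of_lt_of_le (emono Nat.zero_lt_one) (hle 1)⟩
    apply Set.eq_of_subset_of_subset
    · rintro _ ⟨x, hx, rfl⟩
      obtain ⟨n, hn⟩ := hex x hx
      have : b x < g (e n) := hgmem (e n) (hew n) (b x) (Or.inl (Or.inl ⟨x, hn, rfl⟩))
      exact lt_of_lt_of_le (this.trans_le (by rw [← hes]; exact hle (n+1))) le_rfl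
    · intro y hy
      obtain ⟨x, hxw, hbx⟩ := hb.surjOn (show y ∈ Set.Iio omega1 from hy.trans hσw)
      obtain ⟨n, hn⟩ := hex y hy
      have hxm : x ∈ T (e n) := Or.inl (Or.inr ⟨hxw, by rwa [hbx]⟩)
      have : x < e (n+1) := by rw [hes]; exact hgmem (e n) (hew n) x hxm
      exact ⟨x, this.trans_le (hle (n+1)), hbx⟩
  · -- closed
    intro s hs hne hlt
    by_cases hmem : sSup s ∈ s
    · exact hs hmem
    have hbdd : BddAbove s := ⟨omega1, fun x hx => ((hs hx).1).le⟩
    have hlt' : ∀ x ∈ s, x < sSup s := fun x hx =>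
      lt_of_le_of_ne (le_csSup hbdd hx) (fun h => hmem (h ▸ hx))
    have hiio : Set.Iio (sSup s) = ⋃ x ∈ s, Set.Iio x := by
      ext y
      simp only [Set.mem_Iio, Set.mem_iUnion, exists_prop]
      exact ⟨fun h => (lt_csSup_iff hbdd hne).mp h, fun ⟨x, hx, h⟩ => h.trans (hlt' x hx)⟩
    refine ⟨hlt, ?_⟩
    rw [hiio, Set.image_iUnion₂]
    exact Set.iUnion₂_congr fun x hx => (hs hx).2

/-- For `A ⊆ ω₁`, `ω₁ ∈ Ã` (i.e. there is a bijection `b : ω₁ → ω₁` with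
`{α < ω₁ : otp (b[α]) ∈ A}` containing a club) iff `A` contains a club subset of `ω₁`. -/
theorem omega1_mem_tilde_iff_contains_club (A : Set Ordinal.{0})
    (hA : A ⊆ Set.Iio omega1) :
    (∃ b : Ordinal.{0} → Ordinal.{0}, Set.BijOn b (Set.Iio omega1) (Set.Iio omega1) ∧
      ∃ C, IsClub' C ∧ C ⊆ {α | α < omega1 ∧ otp (b '' Set.Iio α) ∈ A}) ↔
    (∃ C, IsClub' C ∧ C ⊆ A) := by

  constructor
  · rintro ⟨b, hb, C, hC, hsub⟩
    refine ⟨C ∩ {α | α < omega1 ∧ b '' Set.Iio α = Set.Iio α}, hC.inter (closurePoints_isClub hb), ?_⟩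
    rintro α ⟨hαC, -, himg⟩
    have h2 := (hsub hαC).2
    rwa [himg, otp_Iio] at h2
  · rintro ⟨C, hC, hCA⟩
    refine ⟨id, Set.bijOn_id _, C, hC, fun α hα => ⟨hC.1 hα, ?_⟩⟩
    rw [Set.image_id, otp_Iio]
    exact hCA hα
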